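/- arXiv:2403.20029 — 7 statements merged into one kernel-verified Lean document; each statement's English description precedes it below -/
import Mathlib

section
/- Let μ > 0 and x_r ≥ 0 be real numbers and ω ≥ 0 be real, and assume √(x_r²·ω/(2μ)) < π. Then the principal argument of the complex number exp(−((x_r²/μ)·ω·I)^(1/2)) equals −√(x_r²·ω/(2μ)). In other words, the phase of the diffusion system G(s) = exp(−√(x_r²·s/μ)) at s = jω is ∠G(jω) = −√(x_r²ω/(2μ)). -/
open Complex

lemma sqrtI_aux {r : ℝ} (hr : 0 < r) :
    ((r : ℂ) * Complex.I) ^ ((1 : ℂ) / 2) =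
      (Real.sqrt (r / 2) : ℂ) * (1 + Complex.I) := by
  have hz : (r : ℂ) * Complex.I ≠ 0 := by
    simp [Complex.ext_iff, hr.ne']
  have hlog : Complex.log ((r : ℂ) * Complex.I) =
      (Real.log r : ℂ) + (Real.pi / 2 : ℝ) * Complex.I := by
    apply Complex.ext
    · simp [Complex.log_re, abs_of_pos hr]
    · simp [Complex.log_im, Complex.arg_real_mul _ hr, Complex.arg_I]
  rw [Complex.cpow_def_of_ne_zero hz, hlog]
  have : ((Real.log r : ℂ) + (Real.pi / 2 : ℝ) * Complex.I) * (1 / 2)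
      = (Real.log r / 2 : ℝ) + (Real.pi / 4 : ℝ) * Complex.I := by
    push_cast; ring
  rw [this, Complex.exp_add, Complex.exp_mul_I, ← Complex.ofReal_exp]
  have h1 : Real.exp (Real.log r / 2) = Real.sqrt r := by
    rw [← Real.log_sqrt hr.le, Real.exp_log (Real.sqrt_pos.2 hr)]
  have h2 : Real.cos (Real.pi / 4) = Real.sqrt 2 / 2 := Real.cos_pi_div_four
  have h3 : Real.sin (Real.pi / 4) = Real.sqrt 2 / 2 := Real.sin_pi_div_four
  have h4 : Real.sqrt r * (Real.sqrt 2 / 2) = Real.sqrt (r / 2) := by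
    rw [Real.sqrt_div_self', Real.sqrt_div hr.le]; ring
  rw [h1, ← Complex.ofReal_cos, ← Complex.ofReal_sin, h2, h3, ← h4]
  push_cast
  ring

theorem diffusion_phase (μ x_r : ℝ) (hμ : 0 < μ) (hx : 0 ≤ x_r) (ω : ℝ) (hω : 0 ≤ ω)
    (hπ : Real.sqrt (x_r ^ 2 * ω / (2 * μ)) < Real.pi) :
    Complex.arg (Complex.exp (-((((x_r ^ 2 / μ) : ℝ) * (ω : ℝ) * Complex.I) ^ ((1 : ℂ) / 2)))) =
      -Real.sqrt (x_r ^ 2 * ω / (2 * μ)) := by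
  set r : ℝ := x_r ^ 2 / μ * ω with hrdef
  have hr0 : 0 ≤ r := by positivity
  have hhalf : r / 2 = x_r ^ 2 * ω / (2 * μ) := by rw [hrdef, div_mul_eq_mul_div, div_div, mul_comm μ 2]
  rcases eq_or_lt_of_le hr0 with h0 | hpos
  · have hr : r = 0 := h0.symm
    have : x_r ^ 2 * ω / (2 * μ) = 0 := by rw [← hhalf, hr]; ring
    rw [this]
    have hz : ((x_r ^ 2 / μ : ℝ) : ℂ) * (ω : ℝ) * Complex.I = 0 := by
      have : ((x_r ^ 2 / μ : ℝ) : ℂ) * (ω : ℝ) = (r : ℂ) := by push_cast [hrdef]; ring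
      rw [this, hr]; simp
    rw [hz, Complex.zero_cpow (by norm_num), neg_zero, Complex.exp_zero, Complex.arg_one,
      Real.sqrt_zero, neg_zero]
  · set c : ℝ := Real.sqrt (x_r ^ 2 * ω / (2 * μ)) with hcdef
    have hc0 : 0 ≤ c := Real.sqrt_nonneg _
    have hzr : ((x_r ^ 2 / μ : ℝ) : ℂ) * (ω : ℝ) * Complex.I = (r : ℂ) * Complex.I := by
      push_cast [hrdef]; ring
    have hsq : Real.sqrt (r / 2) = c := by rw [hhalf]
    rw [hzr, sqrtI_aux hpos, hsq]
    have : -((c : ℂ) * (1 + Complex.I)) = ((-c : ℝ) : ℂ) + ((-c : ℝ) : ℂ) * Complex.I := by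
      push_cast; ring
    rw [this, Complex.exp_add, Complex.exp_mul_I, ← Complex.ofReal_exp,
      
      Complex.arg_real_mul _ (Real.exp_pos _),
      Complex.arg_cos_add_sin_mul_I ⟨by linarith, by linarith [Real.pi_pos]⟩]
end

section
/- Let μ > 0, x_r ≥ 0, and define the logarithmic gain of the diffusion system by g_G(ω) = 20·log₁₀(|exp(−((x_r²/μ)·ω·I)^(1/2))|) for ω > 0. Then for all real 0 < ω₁ ≤ ω₂, the amplitude distortion Q_G := (sup of g_G over [ω₁, ω₂]) − (inf of g_G over [ω₁, ω₂]) satisfies Q_G = g_G(ω₁) − g_G(ω₂) = 20·√(x_r²/(2μ))·(√ω₂ − √ω₁)·log₁₀(e). (Proposition 1, amplitude distortion.) -/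
open Complex

lemma re_sqrt_mul_I (r : ℝ) (hr : 0 ≤ r) :
    (((r : ℂ) * Complex.I) ^ ((1 : ℂ) / 2)).re = Real.sqrt (r / 2) := by
  rcases eq_or_lt_of_le hr with h | h
  · subst r
    simp
  · have hz : (r : ℂ) * Complex.I ≠ 0 := by
      simp [Complex.ext_iff, h.ne']
    rw [Complex.cpow_def_of_ne_zero hz]
    have habs : ‖(r : ℂ) * Complex.I‖ = r := by
      simp [Complex.norm_def, Complex.normSq_apply, Real.sqrt_mul_self hr, abs_of_nonneg hr]
    have harg : Complex.arg ((r : ℂ) * Complex.I) = Real.pi / 2 := by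
      rw [Complex.arg_eq_pi_div_two_iff]
      constructor <;> simp [h]
    have hre : (Complex.log ((r : ℂ) * Complex.I) * ((1:ℂ)/2)).re = Real.log r / 2 := by
      simp [Complex.mul_re, Complex.log_re, Complex.log_im, habs]
      ring
    have him : (Complex.log ((r : ℂ) * Complex.I) * ((1:ℂ)/2)).im = Real.pi / 4 := by
      simp [Complex.mul_im, Complex.log_re, Complex.log_im, harg]
      ring
    rw [Complex.exp_re, hre, him, Real.cos_pi_div_four]
    have h1 : Real.exp (Real.log r / 2) = Real.sqrt r := by
      rw [← Real.log_sqrt hr, Real.exp_log (Real.sqrt_pos.mpr h)]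
    rw [h1]
    rw [show r / 2 = r * (1/2) by ring, Real.sqrt_mul hr]
    rw [show (1:ℝ)/2 = (Real.sqrt 2 / 2)^2 by
      rw [div_pow, Real.sq_sqrt (by norm_num)]; norm_num]
    rw [Real.sqrt_sq (by positivity)]

theorem diffusion_amplitude_distortion (μ x_r : ℝ) (hμ : 0 < μ) (hx : 0 ≤ x_r)
    (ω₁ ω₂ : ℝ) (hω₁ : 0 < ω₁) (h12 : ω₁ ≤ ω₂)
    (g_G : ℝ → ℝ)
    (hg : ∀ ω > (0 : ℝ), g_G ω =
      20 * Real.logb 10 (‖Complex.exp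
        (-((((x_r ^ 2 / μ) : ℝ) * (ω : ℝ) * Complex.I) ^ ((1 : ℂ) / 2)))‖)) :
    sSup (g_G '' Set.Icc ω₁ ω₂) - sInf (g_G '' Set.Icc ω₁ ω₂) = g_G ω₁ - g_G ω₂ ∧
    g_G ω₁ - g_G ω₂ =
      20 * Real.sqrt (x_r ^ 2 / (2 * μ)) * (Real.sqrt ω₂ - Real.sqrt ω₁) *
        Real.logb 10 (Real.exp 1) := by
  set K : ℝ := -(20 * Real.sqrt (x_r ^ 2 / (2 * μ)) * Real.logb 10 (Real.exp 1)) with hK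
  have hlogb : Real.logb 10 (Real.exp 1) = 1 / Real.log 10 := by
    rw [Real.logb, Real.log_exp]
  have hlog10 : 0 < Real.log 10 := Real.log_pos (by norm_num)
  have hKle : K ≤ 0 := by
    rw [hK, hlogb, neg_nonpos]
    have h1 : 0 ≤ Real.sqrt (x_r ^ 2 / (2 * μ)) := Real.sqrt_nonneg _
    have h2 : 0 ≤ 1 / Real.log 10 := by positivity
    positivity
  have hc : 0 ≤ x_r ^ 2 / μ := by positivity
  have hform : ∀ ω > (0 : ℝ), g_G ω = K * Real.sqrt ω := by
    intro ω hω
    rw [hg ω hω]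
    have hr : 0 ≤ x_r ^ 2 / μ * ω := by positivity
    have hcast : (((x_r ^ 2 / μ : ℝ)) : ℂ) * (ω : ℂ) = (((x_r ^ 2 / μ * ω : ℝ)) : ℂ) := by
      push_cast; ring
    rw [hcast, Complex.norm_exp]
    have : (-(((x_r ^ 2 / μ * ω : ℝ) : ℂ) * Complex.I) ^ ((1:ℂ)/2)).re
        = -Real.sqrt (x_r ^ 2 / μ * ω / 2) := by
      rw [Complex.neg_re, re_sqrt_mul_I _ hr]
    rw [this, Real.logb, Real.log_exp]
    have hsq : Real.sqrt (x_r ^ 2 / μ * ω / 2)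
        = Real.sqrt (x_r ^ 2 / (2 * μ)) * Real.sqrt ω := by
      rw [show x_r ^ 2 / μ * ω / 2 = x_r ^ 2 / (2 * μ) * ω by rw [div_mul_eq_mul_div, div_div, div_mul_eq_mul_div, mul_comm μ 2],
        Real.sqrt_mul (by positivity)]
    rw [hsq, hK, hlogb]
    field_simp
  have hmono : ∀ a ∈ Set.Icc ω₁ ω₂, ∀ b ∈ Set.Icc ω₁ ω₂, a ≤ b → g_G b ≤ g_G a := by
    intro a ha b hb hab
    rw [hform a (lt_of_lt_of_le hω₁ ha.1), hform b (lt_of_lt_of_le hω₁ hb.1)]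
    exact mul_le_mul_of_nonpos_left (Real.sqrt_le_sqrt hab) hKle
  have h1m : ω₁ ∈ Set.Icc ω₁ ω₂ := ⟨le_refl _, h12⟩
  have h2m : ω₂ ∈ Set.Icc ω₁ ω₂ := ⟨h12, le_refl _⟩
  have hgreat : IsGreatest (g_G '' Set.Icc ω₁ ω₂) (g_G ω₁) := by
    refine ⟨⟨ω₁, h1m, rfl⟩, ?_⟩
    rintro y ⟨x, hxm, rfl⟩
    exact hmono ω₁ h1m x hxm hxm.1
  have hleast : IsLeast (g_G '' Set.Icc ω₁ ω₂) (g_G ω₂) := by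
    refine ⟨⟨ω₂, h2m, rfl⟩, ?_⟩
    rintro y ⟨x, hxm, rfl⟩
    exact hmono x hxm ω₂ h2m hxm.2
  constructor
  · rw [hgreat.csSup_eq, hleast.csInf_eq]
  · rw [hform ω₁ hω₁, hform ω₂ (lt_of_lt_of_le hω₁ h12), hK]
    ring
end

section
/- Let μ > 0, x_r ≥ 0, let 0 < ω₁ ≤ ω₂ be real with √(x_r²·ω₂/(2μ)) < π, and define the phase delay of the diffusion system by τ_G(ω) = −arg(exp(−((x_r²/μ)·ω·I)^(1/2)))/ω for ω ∈ [ω₁, ω₂], where arg is the principal argument. Then the delay distortion R_G := (1/T₁)·((sup of τ_G over [ω₁, ω₂]) − (inf of τ_G over [ω₁, ω₂])) with T₁ = 2π/ω₁ satisfies R_G = (τ_G(ω₁) − τ_G(ω₂))/T₁ = (1/T₁)·√(x_r²/(2μ))·(1/√ω₁ − 1/√ω₂). (Proposition 1, delay distortion.) -/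
open Complex

theorem diffusion_delay_distortion (μ x_r : ℝ) (hμ : 0 < μ) (hx : 0 ≤ x_r)
    (ω₁ ω₂ : ℝ) (hω₁ : 0 < ω₁) (h12 : ω₁ ≤ ω₂)
    (hπ : Real.sqrt (x_r ^ 2 * ω₂ / (2 * μ)) < Real.pi)
    (T₁ : ℝ) (hT₁ : T₁ = 2 * Real.pi / ω₁)
    (τ_G : ℝ → ℝ)
    (hτ : ∀ ω ∈ Set.Icc ω₁ ω₂, τ_G ω =
      -(Complex.arg (Complex.exp
        (-((((x_r ^ 2 / μ) : ℝ) * (ω : ℝ) * Complex.I) ^ ((1 : ℂ) / 2))))) / ω) :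
    (1 / T₁) * (sSup (τ_G '' Set.Icc ω₁ ω₂) - sInf (τ_G '' Set.Icc ω₁ ω₂)) =
      (τ_G ω₁ - τ_G ω₂) / T₁ ∧
    (τ_G ω₁ - τ_G ω₂) / T₁ =
      (1 / T₁) * Real.sqrt (x_r ^ 2 / (2 * μ)) *
        (1 / Real.sqrt ω₁ - 1 / Real.sqrt ω₂) := by
  set c : ℝ := Real.sqrt (x_r ^ 2 / (2 * μ)) with hc
  have hc0 : 0 ≤ c := Real.sqrt_nonneg _
  have hμ2 : (0:ℝ) < 2 * μ := by linarith
  have ha : 0 ≤ x_r ^ 2 / (2 * μ) := div_nonneg (sq_nonneg _) hμ2.le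
  -- key: τ_G ω = c / √ω on the interval
  have key : ∀ ω ∈ Set.Icc ω₁ ω₂, τ_G ω = c / Real.sqrt ω := by
    intro ω hω
    obtain ⟨hω1, hω2⟩ := hω
    have hωpos : 0 < ω := lt_of_lt_of_le hω₁ hω1
    set s : ℝ := Real.sqrt (x_r ^ 2 / μ * ω / 2) with hs
    have hs0 : 0 ≤ s := Real.sqrt_nonneg _
    have hsπ : s < Real.pi := by
      refine lt_of_le_of_lt ?_ hπ
      apply Real.sqrt_le_sqrt
      rw [div_le_div_iff₀ (by norm_num) hμ2]
      have h1 : x_r ^ 2 * ω ≤ x_r ^ 2 * ω₂ := by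
        apply mul_le_mul_of_nonneg_left hω2 (sq_nonneg _)
      have h2 : x_r ^ 2 / μ * ω * (2 * μ) = 2 * (x_r ^ 2 * ω) := by
        field_simp
      linarith
    set w : ℂ := (s : ℂ) + (s : ℂ) * Complex.I with hw
    have hs2 : (s:ℝ) * s = x_r ^ 2 / μ * ω / 2 := by
      rw [hs]
      exact Real.mul_self_sqrt (by positivity)
    have hw2 : w ^ (2:ℕ) = ((x_r ^ 2 / μ : ℝ) : ℂ) * (ω : ℝ) * Complex.I := by
      have hcast : ((s:ℂ) * s : ℂ) = (x_r:ℂ) ^ 2 / μ * ω / 2 := by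
        exact_mod_cast congrArg (Complex.ofReal) hs2
      rw [hw]
      push_cast
      linear_combination (2 * Complex.I) * hcast + ((s:ℂ) ^ 2) * Complex.I_sq
    have hargw : |w.arg| < Real.pi / 2 := by
      rw [Complex.abs_arg_lt_pi_div_two_iff]
      rcases eq_or_lt_of_le hs0 with h0 | h0
      · right; rw [hw, ← h0]; simp
      · left; simp [hw, h0]
    have hroot : (((x_r ^ 2 / μ : ℝ) : ℂ) * (ω : ℝ) * Complex.I) ^ ((1:ℂ)/2) = w := by
      rw [← hw2, one_div]
      exact Complex.pow_cpow_ofNat_inv (neg_lt_of_abs_lt hargw) (le_of_abs_le hargw.le)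
    have harg : (Complex.exp (-w)).arg = -s := by
      have : Complex.exp (-w) = ((Real.exp (-s) : ℝ) : ℂ) *
          (Complex.cos ((-s : ℝ) : ℂ) + Complex.sin ((-s : ℝ) : ℂ) * Complex.I) := by
        have hsplit : -w = ((-s : ℝ) : ℂ) + ((-s : ℝ) : ℂ) * Complex.I := by
          rw [hw]; push_cast; ring
        rw [hsplit, Complex.exp_add, Complex.exp_mul_I, ← Complex.ofReal_exp]
      rw [this, Complex.arg_real_mul _ (Real.exp_pos _),
        Complex.arg_cos_add_sin_mul_I ⟨by linarith, by linarith [Real.pi_pos]⟩]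
    have hτω := hτ ω ⟨hω1, hω2⟩
    rw [hτω, hroot, harg, neg_neg]
    -- s / ω = c / √ω
    have hsc : s = c * Real.sqrt ω := by
      have harg2 : x_r ^ 2 / μ * ω / 2 = x_r ^ 2 / (2 * μ) * ω := by
        have hμ0 : μ ≠ 0 := ne_of_gt hμ
        field_simp
      rw [hs, hc, ← Real.sqrt_mul ha, harg2]
    have hsqω : Real.sqrt ω ≠ 0 := ne_of_gt (Real.sqrt_pos.mpr hωpos)
    rw [hsc, div_eq_div_iff (ne_of_gt hωpos) hsqω]
    rw [mul_assoc, Real.mul_self_sqrt hωpos.le]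
  have h1m : ω₁ ∈ Set.Icc ω₁ ω₂ := ⟨le_refl _, h12⟩
  have h2m : ω₂ ∈ Set.Icc ω₁ ω₂ := ⟨h12, le_refl _⟩
  have hub : ∀ y ∈ τ_G '' Set.Icc ω₁ ω₂, y ≤ τ_G ω₁ := by
    rintro y ⟨ω, hω, rfl⟩
    rw [key ω hω, key ω₁ h1m]
    exact div_le_div_of_nonneg_left hc0 (Real.sqrt_pos.mpr hω₁)
      (Real.sqrt_le_sqrt hω.1)
  have hlb : ∀ y ∈ τ_G '' Set.Icc ω₁ ω₂, τ_G ω₂ ≤ y := by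
    rintro y ⟨ω, hω, rfl⟩
    rw [key ω hω, key ω₂ h2m]
    exact div_le_div_of_nonneg_left hc0
      (Real.sqrt_pos.mpr (lt_of_lt_of_le hω₁ hω.1)) (Real.sqrt_le_sqrt hω.2)
  have hsSup : sSup (τ_G '' Set.Icc ω₁ ω₂) = τ_G ω₁ :=
    IsGreatest.csSup_eq ⟨⟨ω₁, h1m, rfl⟩, hub⟩
  have hsInf : sInf (τ_G '' Set.Icc ω₁ ω₂) = τ_G ω₂ :=
    IsLeast.csInf_eq ⟨⟨ω₂, h2m, rfl⟩, hlb⟩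
  constructor
  · rw [hsSup, hsInf]; ring
  · rw [key ω₁ h1m, key ω₂ h2m]; ring
end

section
/- Let k_r > 0 be real, define τ_H(ω) = arctan(ω/k_r)/ω for ω > 0, and let 0 < ω₁ ≤ ω₂ be reals. Then the delay distortion R_H := (1/T₁)·((sup of τ_H over [ω₁, ω₂]) − (inf of τ_H over [ω₁, ω₂])) with T₁ = 2π/ω₁ satisfies R_H = (τ_H(ω₁) − τ_H(ω₂))/T₁ = (1/(2π))·(arctan(ω₁/k_r) − (ω₁/ω₂)·arctan(ω₂/k_r)). (Proposition 2, delay distortion.) -/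
lemma arctan_aux (t : ℝ) (ht0 : 0 ≤ t) (ht1 : t ≤ 1) (x : ℝ) (hx : 0 ≤ x) :
    t * Real.arctan x ≤ Real.arctan (t * x) := by
  have hder : ∀ y : ℝ, HasDerivAt (fun y => Real.arctan (t * y) - t * Real.arctan y)
      ((1 / (1 + (t * y) ^ 2)) * t - t * (1 / (1 + y ^ 2))) y := by
    intro y
    have h1 : HasDerivAt (fun y => Real.arctan (t * y)) ((1 / (1 + (t * y) ^ 2)) * t) y := by
      simpa [Function.comp_def] using (Real.hasDerivAt_arctan (t * y)).comp y ((hasDerivAt_id y).const_mul t)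
    have h2 : HasDerivAt (fun y => t * Real.arctan y) (t * (1 / (1 + y ^ 2))) y :=
      (Real.hasDerivAt_arctan y).const_mul t
    exact h1.sub h2
  have key : MonotoneOn (fun y => Real.arctan (t * y) - t * Real.arctan y) (Set.Ici 0) := by
    apply monotoneOn_of_deriv_nonneg (convex_Ici 0)
    · exact fun y _ => (hder y).continuousAt.continuousWithinAt
    · exact fun y _ => (hder y).differentiableAt.differentiableWithinAt
    · intro y hy
      rw [(hder y).deriv]
      have ht2 : t ^ 2 ≤ 1 := by nlinarith
      have hty : (t * y) ^ 2 ≤ y ^ 2 := by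
        rw [mul_pow]
        nlinarith [mul_nonneg (sub_nonneg.mpr ht2) (sq_nonneg y)]
      have hp1 : (0 : ℝ) < 1 + (t * y) ^ 2 := by positivity
      have hp2 : (0 : ℝ) < 1 + y ^ 2 := by positivity
      have : 1 / (1 + y ^ 2) ≤ 1 / (1 + (t * y) ^ 2) := by
        apply one_div_le_one_div_of_le hp1; linarith
      nlinarith
  have := key (Set.mem_Ici.mpr le_rfl) (Set.mem_Ici.mpr hx) hx
  simp only [mul_zero, Real.arctan_zero, sub_zero] at this
  linarith

lemma tau_anti (k : ℝ) (hk : 0 < k) (a b : ℝ) (ha : 0 < a) (hab : a ≤ b) :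
    Real.arctan (b / k) / b ≤ Real.arctan (a / k) / a := by
  have hb : 0 < b := lt_of_lt_of_le ha hab
  rw [div_le_div_iff₀ hb ha]
  have h := arctan_aux (a / b) (by positivity) (by rw [div_le_one hb]; exact hab)
    (b / k) (by positivity)
  have heq : a / b * (b / k) = a / k := by field_simp
  rw [heq] at h
  have h' := mul_le_mul_of_nonneg_left h hb.le
  have hba : b * (a / b * Real.arctan (b / k)) = a * Real.arctan (b / k) := by
    field_simp
  rw [hba] at h'
  nlinarith

theorem reception_delay_distortion (k_r : ℝ) (hkr : 0 < k_r) (τ_H : ℝ → ℝ)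
    (hτ : ∀ ω > (0 : ℝ), τ_H ω = Real.arctan (ω / k_r) / ω)
    (ω₁ ω₂ : ℝ) (hω₁ : 0 < ω₁) (h12 : ω₁ ≤ ω₂)
    (T₁ : ℝ) (hT₁ : T₁ = 2 * Real.pi / ω₁) :
    (1 / T₁) * (sSup (τ_H '' Set.Icc ω₁ ω₂) - sInf (τ_H '' Set.Icc ω₁ ω₂)) =
      (τ_H ω₁ - τ_H ω₂) / T₁ ∧
    (τ_H ω₁ - τ_H ω₂) / T₁ =
      (1 / (2 * Real.pi)) *
        (Real.arctan (ω₁ / k_r) - (ω₁ / ω₂) * Real.arctan (ω₂ / k_r)) := by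
  have hω₂ : 0 < ω₂ := lt_of_lt_of_le hω₁ h12
  have hAnti : ∀ a ∈ Set.Icc ω₁ ω₂, ∀ b ∈ Set.Icc ω₁ ω₂, a ≤ b → τ_H b ≤ τ_H a := by
    intro a ha b hb hab
    have ha0 : 0 < a := lt_of_lt_of_le hω₁ ha.1
    rw [hτ a ha0, hτ b (lt_of_lt_of_le ha0 hab)]
    exact tau_anti k_r hkr a b ha0 hab
  have h1mem : ω₁ ∈ Set.Icc ω₁ ω₂ := ⟨le_refl _, h12⟩
  have h2mem : ω₂ ∈ Set.Icc ω₁ ω₂ := ⟨h12, le_refl _⟩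
  have hGreat : IsGreatest (τ_H '' Set.Icc ω₁ ω₂) (τ_H ω₁) := by
    constructor
    · exact Set.mem_image_of_mem _ h1mem
    · rintro z ⟨c, hc, rfl⟩
      exact hAnti ω₁ h1mem c hc hc.1
  have hLeast : IsLeast (τ_H '' Set.Icc ω₁ ω₂) (τ_H ω₂) := by
    constructor
    · exact Set.mem_image_of_mem _ h2mem
    · rintro z ⟨c, hc, rfl⟩
      exact hAnti c hc ω₂ h2mem hc.2
  constructor
  · rw [hGreat.csSup_eq, hLeast.csInf_eq]; ring
  · rw [hτ ω₁ hω₁, hτ ω₂ hω₂, hT₁]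
    have hπ : Real.pi ≠ 0 := Real.pi_ne_zero
    field_simp
end

section
/- Let μ > 0, x_r ≥ 0, k_f > 0, r > 0, k_r > 0, and 0 < ω₁ ≤ ω₂ be real numbers. Define g_G(ω) = −20·√(x_r²·ω/(2μ))·log₁₀(e), g_H(ω) = 20·log₁₀(k_f·r/√(ω² + k_r²)), and g_M = g_G + g_H. Then the amplitude distortion of the combined MC channel decomposes additively: (sup of g_M over [ω₁, ω₂]) − (inf of g_M over [ω₁, ω₂]) = [g_G(ω₁) − g_G(ω₂)] + [g_H(ω₁) − g_H(ω₂)], i.e., Q_M = Q_G + Q_H. -/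
theorem mc_amplitude_distortion_additive (μ x_r k_f r k_r : ℝ)
    (hμ : 0 < μ) (hx : 0 ≤ x_r) (hkf : 0 < k_f) (hr : 0 < r) (hkr : 0 < k_r)
    (ω₁ ω₂ : ℝ) (hω₁ : 0 < ω₁) (h12 : ω₁ ≤ ω₂)
    (g_G g_H g_M : ℝ → ℝ)
    (hG : ∀ ω : ℝ, g_G ω =
      -(20 * Real.sqrt (x_r ^ 2 * ω / (2 * μ)) * Real.logb 10 (Real.exp 1)))
    (hH : ∀ ω : ℝ, g_H ω = 20 * Real.logb 10 (k_f * r / Real.sqrt (ω ^ 2 + k_r ^ 2)))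
    (hM : g_M = g_G + g_H) :
    sSup (g_M '' Set.Icc ω₁ ω₂) - sInf (g_M '' Set.Icc ω₁ ω₂) =
      (g_G ω₁ - g_G ω₂) + (g_H ω₁ - g_H ω₂) := by
  -- monotonicity of each component on the interval
  have hmono : ∀ a b : ℝ, a ∈ Set.Icc ω₁ ω₂ → b ∈ Set.Icc ω₁ ω₂ → a ≤ b →
      g_M b ≤ g_M a := by
    intro a b ha hb hab
    have ha0 : 0 < a := lt_of_lt_of_le hω₁ ha.1
    have hb0 : 0 < b := lt_of_lt_of_le hω₁ hb.1
    have hGle : g_G b ≤ g_G a := by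
      rw [hG a, hG b]
      have hL : 0 ≤ Real.logb 10 (Real.exp 1) :=
        Real.logb_nonneg (by norm_num) (Real.one_le_exp (by norm_num))
      have hsq : Real.sqrt (x_r ^ 2 * a / (2 * μ)) ≤
          Real.sqrt (x_r ^ 2 * b / (2 * μ)) := by
        apply Real.sqrt_le_sqrt
        have h1 : x_r ^ 2 * a ≤ x_r ^ 2 * b :=
          mul_le_mul_of_nonneg_left hab (sq_nonneg _)
        have h2 : (0:ℝ) < 2 * μ := by linarith
        exact div_le_div_of_nonneg_right h1 h2.le |>.trans_eq rfl
      nlinarith [hsq]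
    have hHle : g_H b ≤ g_H a := by
      rw [hH a, hH b]
      have hsa : 0 < Real.sqrt (a ^ 2 + k_r ^ 2) :=
        Real.sqrt_pos.mpr (by positivity)
      have hsb : 0 < Real.sqrt (b ^ 2 + k_r ^ 2) :=
        Real.sqrt_pos.mpr (by positivity)
      have hsle : Real.sqrt (a ^ 2 + k_r ^ 2) ≤ Real.sqrt (b ^ 2 + k_r ^ 2) := by
        apply Real.sqrt_le_sqrt
        nlinarith
      have hdiv : k_f * r / Real.sqrt (b ^ 2 + k_r ^ 2) ≤
          k_f * r / Real.sqrt (a ^ 2 + k_r ^ 2) :=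
        div_le_div_of_nonneg_left (by positivity) hsa hsle
      have hpos : 0 < k_f * r / Real.sqrt (b ^ 2 + k_r ^ 2) := by positivity
      have := Real.logb_le_logb_of_le (b := 10) (by norm_num) hpos hdiv
      linarith
    rw [hM]
    simp only [Pi.add_apply]
    linarith
  have hmem₁ : ω₁ ∈ Set.Icc ω₁ ω₂ := ⟨le_refl _, h12⟩
  have hmem₂ : ω₂ ∈ Set.Icc ω₁ ω₂ := ⟨h12, le_refl _⟩
  have hgreat : IsGreatest (g_M '' Set.Icc ω₁ ω₂) (g_M ω₁) := by
    constructor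
    · exact ⟨ω₁, hmem₁, rfl⟩
    · rintro y ⟨x, hx', rfl⟩
      exact hmono ω₁ x hmem₁ hx' hx'.1
  have hleast : IsLeast (g_M '' Set.Icc ω₁ ω₂) (g_M ω₂) := by
    constructor
    · exact ⟨ω₂, hmem₂, rfl⟩
    · rintro y ⟨x, hx', rfl⟩
      exact hmono x ω₂ hx' hmem₂ hx'.2
  rw [hgreat.csSup_eq, hleast.csInf_eq, hM]
  simp only [Pi.add_apply]
  ring
end

section
/- Let λ > 0 and ω₂ > 0 be real numbers, and define φ(ω₁) = (ω₁/(2π))·λ·(1/√ω₁ − 1/√ω₂) for ω₁ ∈ (0, ω₂]. Then φ attains its maximum on (0, ω₂] uniquely at ω₁ = ω₂/4; i.e., for all ω₁ ∈ (0, ω₂] with ω₁ ≠ ω₂/4, φ(ω₁) < φ(ω₂/4). -/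
theorem diffusion_delay_distortion_max (lam ω₂ : ℝ) (hlam : 0 < lam) (hω₂ : 0 < ω₂)
    (φ : ℝ → ℝ)
    (hφ : ∀ ω₁ ∈ Set.Ioc (0 : ℝ) ω₂,
      φ ω₁ = (ω₁ / (2 * Real.pi)) * lam * (1 / Real.sqrt ω₁ - 1 / Real.sqrt ω₂)) :
    ∀ ω₁ ∈ Set.Ioc (0 : ℝ) ω₂, ω₁ ≠ ω₂ / 4 → φ ω₁ < φ (ω₂ / 4) := by
  intro ω₁ hmem hne
  obtain ⟨h1, h2⟩ := hmem
  have hq : ω₂ / 4 ∈ Set.Ioc (0 : ℝ) ω₂ := ⟨by linarith, by linarith⟩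
  rw [hφ ω₁ ⟨h1, h2⟩, hφ _ hq]
  have hspos : 0 < Real.sqrt ω₁ := Real.sqrt_pos.mpr h1
  have hbpos : 0 < Real.sqrt ω₂ := Real.sqrt_pos.mpr hω₂
  have hs2 : Real.sqrt ω₁ ^ 2 = ω₁ := Real.sq_sqrt h1.le
  have hb2 : Real.sqrt ω₂ ^ 2 = ω₂ := Real.sq_sqrt hω₂.le
  have h4 : Real.sqrt 4 = 2 := by
    rw [show (4:ℝ) = 2^2 by norm_num, Real.sqrt_sq (by norm_num : (0:ℝ) ≤ 2)]
  have hsq4 : Real.sqrt (ω₂ / 4) = Real.sqrt ω₂ / 2 := by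
    rw [Real.sqrt_div hω₂.le, h4]
  set s := Real.sqrt ω₁
  set b := Real.sqrt ω₂
  have hpi : 0 < Real.pi := Real.pi_pos
  have hne' : s ≠ b / 2 := by
    intro h
    apply hne
    have : s ^ 2 = (b / 2) ^ 2 := by rw [h]
    rw [hs2] at this
    rw [this]; field_simp; linarith [hb2]
  rw [hsq4]
  have key : ω₁ * (1 / s - 1 / b) < (ω₂ / 4) * (1 / (b / 2) - 1 / b) := by
    rw [← hs2, ← hb2]
    have h2s : (2 * s - b) ^ 2 > 0 := by
      have : 2 * s - b ≠ 0 := fun h => hne' (by linarith)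
      positivity
    have e1 : s ^ 2 * (1 / s - 1 / b) = s - s ^ 2 / b := by
      field_simp
    have e2 : b ^ 2 / 4 * (1 / (b / 2) - 1 / b) = b / 4 := by
      field_simp; ring
    rw [e1, e2, ← sub_pos]
    have e3 : b / 4 - (s - s ^ 2 / b) = (2 * s - b) ^ 2 / (4 * b) := by
      field_simp; ring
    rw [e3]; positivity
  calc ω₁ / (2 * Real.pi) * lam * (1 / s - 1 / b)
      = (ω₁ * (1 / s - 1 / b)) * (lam / (2 * Real.pi)) := by ring
    _ < ((ω₂ / 4) * (1 / (b / 2) - 1 / b)) * (lam / (2 * Real.pi)) := by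
        apply mul_lt_mul_of_pos_right key (by positivity)
    _ = ω₂ / 4 / (2 * Real.pi) * lam * (1 / (b / 2) - 1 / b) := by ring
end

section
/- Let ω₂ > 0 be a real number, and define ψ(ω₁) = (1/(2π))·(arctan(ω₁) − (ω₁/ω₂)·arctan(ω₂)) for ω₁ ∈ (0, ω₂]. Let ω₁* = √(ω₂/arctan(ω₂) − 1). Then 0 < ω₁* ≤ ω₂, and ψ attains its maximum on (0, ω₂] uniquely at ω₁ = ω₁*; i.e., for all ω₁ ∈ (0, ω₂] with ω₁ ≠ ω₁*, ψ(ω₁) < ψ(ω₁*). -/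
open Real Set

private lemma my_arctan_lt_self {x : ℝ} (hx : 0 < x) : Real.arctan x < x := by
  have h : StrictMonoOn (fun y : ℝ => y - Real.arctan y) (Set.Ici 0) := by
    apply strictMonoOn_of_deriv_pos (convex_Ici 0)
    · exact (continuous_id.sub Real.continuous_arctan).continuousOn
    · intro y hy
      rw [interior_Ici] at hy
      have hd : HasDerivAt (fun y : ℝ => y - Real.arctan y) (1 - 1 / (1 + y ^ 2)) y :=
        (hasDerivAt_id y).sub (Real.hasDerivAt_arctan y)
      rw [hd.deriv]
      have h1 : (1 : ℝ) < 1 + y ^ 2 := by nlinarith [Set.mem_Ioi.mp hy]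
      have : 1 / (1 + y ^ 2) < 1 := by
        rw [div_lt_one (by linarith)]; exact h1
      linarith
  have := h (Set.self_mem_Ici) (Set.mem_Ici.mpr hx.le) hx
  simp only [Real.arctan_zero, sub_zero] at this
  linarith

private lemma my_div_le_arctan {x : ℝ} (hx : 0 ≤ x) : x / (1 + x ^ 2) ≤ Real.arctan x := by
  have hd : ∀ y : ℝ, HasDerivAt (fun y : ℝ => Real.arctan y - y / (1 + y ^ 2))
      (1 / (1 + y ^ 2) - ((1 : ℝ) * (1 + y ^ 2) - y * (2 * y)) / (1 + y ^ 2) ^ 2) y := by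
    intro y
    have hne : (1 + y ^ 2 : ℝ) ≠ 0 := by positivity
    apply (Real.hasDerivAt_arctan y).sub
    have hden : HasDerivAt (fun y : ℝ => 1 + y ^ 2) (2 * y) y := by
      simpa using (hasDerivAt_pow 2 y).const_add 1
    exact (hasDerivAt_id y).div hden hne
  have h : MonotoneOn (fun y : ℝ => Real.arctan y - y / (1 + y ^ 2)) (Set.Ici 0) := by
    apply monotoneOn_of_deriv_nonneg (convex_Ici 0)
    · apply ContinuousOn.sub Real.continuous_arctan.continuousOn
      apply ContinuousOn.div continuousOn_id
      · exact (continuous_const.add (continuous_pow 2)).continuousOn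
      · intro y _; positivity
    · intro y _
      exact (hd y).differentiableAt.differentiableWithinAt
    · intro y hy
      rw [(hd y).deriv]
      have hne : (1 + y ^ 2 : ℝ) ≠ 0 := by positivity
      have key : 1 / (1 + y ^ 2) - ((1 : ℝ) * (1 + y ^ 2) - y * (2 * y)) / (1 + y ^ 2) ^ 2
          = 2 * y ^ 2 / (1 + y ^ 2) ^ 2 := by
        field_simp; ring
      rw [key]; positivity
  have := h (Set.self_mem_Ici) (Set.mem_Ici.mpr hx) hx
  simp only [Real.arctan_zero, zero_div, sub_zero] at this
  norm_num at this
  linarith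

theorem reception_delay_distortion_max (ω₂ : ℝ) (hω₂ : 0 < ω₂)
    (ψ : ℝ → ℝ)
    (hψ : ∀ ω₁ ∈ Set.Ioc (0 : ℝ) ω₂,
      ψ ω₁ = (1 / (2 * Real.pi)) * (Real.arctan ω₁ - (ω₁ / ω₂) * Real.arctan ω₂))
    (ω₁star : ℝ) (hstar : ω₁star = Real.sqrt (ω₂ / Real.arctan ω₂ - 1)) :
    (0 < ω₁star ∧ ω₁star ≤ ω₂) ∧
    ∀ ω₁ ∈ Set.Ioc (0 : ℝ) ω₂, ω₁ ≠ ω₁star → ψ ω₁ < ψ ω₁star := by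
  have hat : 0 < Real.arctan ω₂ := by simpa using Real.arctan_strictMono hω₂
  have hlt : Real.arctan ω₂ < ω₂ := my_arctan_lt_self hω₂
  have harg : 0 < ω₂ / Real.arctan ω₂ - 1 := by
    rw [sub_pos, lt_div_iff₀ hat]; linarith
  have hsq : ω₁star ^ 2 = ω₂ / Real.arctan ω₂ - 1 := by
    rw [hstar, Real.sq_sqrt harg.le]
  have heq : Real.arctan ω₂ * (1 + ω₁star ^ 2) = ω₂ := by
    rw [hsq]; field_simp; ring
  have hstar_pos : 0 < ω₁star := by
    rw [hstar]; exact Real.sqrt_pos.mpr harg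
  have hstar_le : ω₁star ≤ ω₂ := by
    have h1 : ω₂ / (1 + ω₂ ^ 2) ≤ Real.arctan ω₂ := my_div_le_arctan hω₂.le
    rw [div_le_iff₀ (by positivity : (0:ℝ) < 1 + ω₂ ^ 2)] at h1
    have h2 : ω₁star ^ 2 ≤ ω₂ ^ 2 := by
      rw [hsq, sub_le_iff_le_add, div_le_iff₀ hat]; linarith
    nlinarith [hstar_pos, hω₂]
  refine ⟨⟨hstar_pos, hstar_le⟩, ?_⟩
  set f : ℝ → ℝ := fun x => Real.arctan x - x / ω₂ * Real.arctan ω₂ with hf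
  have hfd : ∀ x : ℝ, HasDerivAt f (1 / (1 + x ^ 2) - Real.arctan ω₂ / ω₂) x := by
    intro x
    have h1 : HasDerivAt (fun x : ℝ => x / ω₂ * Real.arctan ω₂)
        (1 / ω₂ * Real.arctan ω₂) x := ((hasDerivAt_id x).div_const ω₂).mul_const _
    have := (Real.hasDerivAt_arctan x).sub h1
    refine this.congr_deriv ?_; ring
  have hcont : Continuous f :=
    Real.continuous_arctan.sub ((continuous_id.div_const ω₂).mul continuous_const)
  have hmono : StrictMonoOn f (Set.Icc 0 ω₁star) := by
    apply strictMonoOn_of_deriv_pos (convex_Icc _ _) hcont.continuousOn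
    intro x hx
    rw [interior_Icc] at hx
    rw [(hfd x).deriv, sub_pos, div_lt_div_iff₀ hω₂ (by positivity : (0:ℝ) < 1 + x ^ 2)]
    nlinarith [hx.1, hx.2, mul_pos hat (show (0:ℝ) < ω₁star ^ 2 - x ^ 2 by nlinarith [hx.1, hx.2])]
  have hanti : StrictAntiOn f (Set.Icc ω₁star ω₂) := by
    apply strictAntiOn_of_deriv_neg (convex_Icc _ _) hcont.continuousOn
    intro x hx
    rw [interior_Icc] at hx
    rw [(hfd x).deriv, sub_neg, div_lt_div_iff₀ (by positivity : (0:ℝ) < 1 + x ^ 2) hω₂]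
    nlinarith [hx.1, mul_pos hat (show (0:ℝ) < x ^ 2 - ω₁star ^ 2 by nlinarith [hx.1, hstar_pos])]
  intro ω₁ h hne
  rw [hψ ω₁ h, hψ ω₁star ⟨hstar_pos, hstar_le⟩]
  have hc : 0 < 1 / (2 * Real.pi) := by positivity
  apply mul_lt_mul_of_pos_left _ hc
  show f ω₁ < f ω₁star
  rcases lt_or_gt_of_ne hne with hl | hg
  · exact hmono ⟨h.1.le, hl.le⟩ ⟨hstar_pos.le, le_rfl⟩ hl
  · exact hanti ⟨le_rfl, hstar_le⟩ ⟨hg.le, h.2⟩ hg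
end
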